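/- Let A ∈ ℝ^{n×n} be invertible and B ∈ ℝ^{n×m}. The following statements are equivalent: (1) there exists a signal σ ∈ ℒ(𝒜) such that for all t ∈ ℕ the reachability matrix C_σ(t) has rank strictly less than n; (2) there exists a sequence of finite words w_i ∈ 𝒲(𝒜), where w_i has length i for every integer i ≥ 1, such that the reachability matrix C_{w_i}(i) has rank strictly less than n for every i ≥ 1. -/

import Mathlib

open Matrix Filter

/-- An automaton `𝒜 = (M, s)` with `N` nodes: transition matrix `M ∈ {0,1}^{N×N}`
and vector of node labels `s ∈ {0,1}^N`. -/
structure Automaton (N : ℕ) where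
  M : Matrix (Fin N) (Fin N) Bool
  s : Fin N → Bool

/-- `σ ∈ ℒ(𝒜)`: the data loss signal `σ` is admissible with respect to `𝒜`. -/
def Automaton.Admissible {N : ℕ} (𝒜 : Automaton N) (σ : ℕ → Bool) : Prop :=
  ∃ v : ℕ → Fin N, ∀ t : ℕ, 𝒜.M (v t) (v (t + 1)) = true ∧ σ t = 𝒜.s (v t)

/-- A finite word of length `r` generated by `𝒜` (only the first `r` letters of `w` matter). -/
def Automaton.AdmissibleWord {N : ℕ} (𝒜 : Automaton N) (r : ℕ) (w : ℕ → Bool) : Prop :=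
  ∃ v : ℕ → Fin N, (∀ t : ℕ, t + 1 < r → 𝒜.M (v t) (v (t + 1)) = true) ∧
    ∀ t : ℕ, t < r → w t = 𝒜.s (v t)

/-- The reverse automaton `𝒜ʳ = (Mᵀ, s)`. -/
def Automaton.rev {N : ℕ} (𝒜 : Automaton N) : Automaton N :=
  ⟨𝒜.M.transpose, 𝒜.s⟩

/-- Observability of the system `(A, C, 𝒜)`. -/
def Observable {N n p : ℕ} (A : Matrix (Fin n) (Fin n) ℝ) (C : Matrix (Fin p) (Fin n) ℝ)
    (𝒜 : Automaton N) : Prop :=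
  ∀ σ : ℕ → Bool, 𝒜.Admissible σ → ∀ x₀ : Fin n → ℝ,
    (∀ t : ℕ, σ t = true → (C * A ^ t).mulVec x₀ = 0) → x₀ = 0

/-- Practical observability of the system `(A, C, 𝒜)`. -/
def PracticallyObservable {N n p : ℕ} (A : Matrix (Fin n) (Fin n) ℝ)
    (C : Matrix (Fin p) (Fin n) ℝ) (𝒜 : Automaton N) : Prop :=
  ∃ T : ℕ, ∀ σ : ℕ → Bool, 𝒜.Admissible σ → ∀ x₀ : Fin n → ℝ,
    (∀ t : ℕ, t ≤ T → σ t = true → (C * A ^ t).mulVec x₀ = 0) → x₀ = 0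

/-- Constructibility of the system `(A, C, 𝒜)`. -/
def Constructible {N n p : ℕ} (A : Matrix (Fin n) (Fin n) ℝ) (C : Matrix (Fin p) (Fin n) ℝ)
    (𝒜 : Automaton N) : Prop :=
  ∀ σ : ℕ → Bool, 𝒜.Admissible σ → ∃ T : ℕ, ∀ x₀ : Fin n → ℝ,
    (∀ t : ℕ, t ≤ T → σ t = true → (C * A ^ t).mulVec x₀ = 0) → (A ^ T).mulVec x₀ = 0

/-- Practical constructibility of the system `(A, C, 𝒜)`. -/
def PracticallyConstructible {N n p : ℕ} (A : Matrix (Fin n) (Fin n) ℝ)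
    (C : Matrix (Fin p) (Fin n) ℝ) (𝒜 : Automaton N) : Prop :=
  ∃ T : ℕ, ∀ σ : ℕ → Bool, 𝒜.Admissible σ → ∀ x₀ : Fin n → ℝ,
    (∀ t : ℕ, t ≤ T → σ t = true → (C * A ^ t).mulVec x₀ = 0) → (A ^ T).mulVec x₀ = 0

/-- Detectability of the system `(A, C, 𝒜)`. -/
def Detectable {N n p : ℕ} (A : Matrix (Fin n) (Fin n) ℝ) (C : Matrix (Fin p) (Fin n) ℝ)
    (𝒜 : Automaton N) : Prop :=
  ∀ σ : ℕ → Bool, 𝒜.Admissible σ → ∀ x₀ : Fin n → ℝ,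
    (∀ t : ℕ, σ t = true → (C * A ^ t).mulVec x₀ = 0) →
      Tendsto (fun t : ℕ => (A ^ t).mulVec x₀) atTop (nhds 0)

/-- The observability matrix `O_σ(t) = [σ(0)C; σ(1)CA; ...; σ(t−1)CA^{t−1}]`
(blocks stacked vertically, block `i` is row-block `i`). -/
def obsMat {n p : ℕ} (A : Matrix (Fin n) (Fin n) ℝ) (C : Matrix (Fin p) (Fin n) ℝ)
    (σ : ℕ → Bool) (t : ℕ) : Matrix (Fin t × Fin p) (Fin n) ℝ :=
  fun ij k => if σ (ij.1 : ℕ) then (C * A ^ (ij.1 : ℕ)) ij.2 k else 0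

/-- State trajectory of the system `x(t+1) = A x(t) + σ(t) B u(t)`. -/
def traj {n m : ℕ} (A : Matrix (Fin n) (Fin n) ℝ) (B : Matrix (Fin n) (Fin m) ℝ)
    (σ : ℕ → Bool) (u : ℕ → Fin m → ℝ) (x₀ : Fin n → ℝ) : ℕ → Fin n → ℝ
  | 0 => x₀
  | t + 1 => A.mulVec (traj A B σ u x₀ t) + if σ t then B.mulVec (u t) else 0

/-- Controllability of the system `(A, B, 𝒜)`. -/
def Controllable {N n m : ℕ} (A : Matrix (Fin n) (Fin n) ℝ) (B : Matrix (Fin n) (Fin m) ℝ)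
    (𝒜 : Automaton N) : Prop :=
  ∀ σ : ℕ → Bool, 𝒜.Admissible σ → ∀ x₀ xf : Fin n → ℝ,
    ∃ u : ℕ → Fin m → ℝ, ∃ T : ℕ, traj A B σ u x₀ T = xf

/-- Reachability of the system `(A, B, 𝒜)`. -/
def Reachable {N n m : ℕ} (A : Matrix (Fin n) (Fin n) ℝ) (B : Matrix (Fin n) (Fin m) ℝ)
    (𝒜 : Automaton N) : Prop :=
  ∀ σ : ℕ → Bool, 𝒜.Admissible σ → ∀ xf : Fin n → ℝ,
    ∃ u : ℕ → Fin m → ℝ, ∃ T : ℕ, traj A B σ u 0 T = xf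

/-- 0-controllability of the system `(A, B, 𝒜)`. -/
def ZeroControllable {N n m : ℕ} (A : Matrix (Fin n) (Fin n) ℝ) (B : Matrix (Fin n) (Fin m) ℝ)
    (𝒜 : Automaton N) : Prop :=
  ∀ σ : ℕ → Bool, 𝒜.Admissible σ → ∀ x₀ : Fin n → ℝ,
    ∃ u : ℕ → Fin m → ℝ, ∃ T : ℕ, traj A B σ u x₀ T = 0

/-- Stabilizability of the system `(A, B, 𝒜)`. -/
def Stabilizable {N n m : ℕ} (A : Matrix (Fin n) (Fin n) ℝ) (B : Matrix (Fin n) (Fin m) ℝ)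
    (𝒜 : Automaton N) : Prop :=
  ∀ σ : ℕ → Bool, 𝒜.Admissible σ → ∀ x₀ : Fin n → ℝ,
    ∃ u : ℕ → Fin m → ℝ, Tendsto (fun t : ℕ => traj A B σ u x₀ t) atTop (nhds 0)

/-- Practical controllability of the system `(A, B, 𝒜)`. -/
def PracticallyControllable {N n m : ℕ} (A : Matrix (Fin n) (Fin n) ℝ)
    (B : Matrix (Fin n) (Fin m) ℝ) (𝒜 : Automaton N) : Prop :=
  ∃ T : ℕ, ∀ σ : ℕ → Bool, 𝒜.Admissible σ → ∀ x₀ xf : Fin n → ℝ,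
    ∃ u : ℕ → Fin m → ℝ, ∃ t : ℕ, t ≤ T ∧ traj A B σ u x₀ t = xf

/-- Practical reachability of the system `(A, B, 𝒜)`. -/
def PracticallyReachable {N n m : ℕ} (A : Matrix (Fin n) (Fin n) ℝ)
    (B : Matrix (Fin n) (Fin m) ℝ) (𝒜 : Automaton N) : Prop :=
  ∃ T : ℕ, ∀ σ : ℕ → Bool, 𝒜.Admissible σ → ∀ xf : Fin n → ℝ,
    ∃ u : ℕ → Fin m → ℝ, ∃ t : ℕ, t ≤ T ∧ traj A B σ u 0 t = xf

/-- Practical 0-controllability of the system `(A, B, 𝒜)`. -/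
def PracticallyZeroControllable {N n m : ℕ} (A : Matrix (Fin n) (Fin n) ℝ)
    (B : Matrix (Fin n) (Fin m) ℝ) (𝒜 : Automaton N) : Prop :=
  ∃ T : ℕ, ∀ σ : ℕ → Bool, 𝒜.Admissible σ → ∀ x₀ : Fin n → ℝ,
    ∃ u : ℕ → Fin m → ℝ, ∃ t : ℕ, t ≤ T ∧ traj A B σ u x₀ t = 0

/-- The reachability matrix `C_σ(t) = [σ(t−1)B, σ(t−2)AB, ..., σ(0)A^{t−1}B]`
(block-column `i` is `σ(t−1−i) Aⁱ B`). -/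
def reachMat {n m : ℕ} (A : Matrix (Fin n) (Fin n) ℝ) (B : Matrix (Fin n) (Fin m) ℝ)
    (σ : ℕ → Bool) (t : ℕ) : Matrix (Fin n) (Fin t × Fin m) ℝ :=
  fun k ij => if σ (t - 1 - (ij.1 : ℕ)) then (A ^ (ij.1 : ℕ) * B) k ij.2 else 0

/-- State trajectory of the system with varying delays
`x(t+1) = A x(t) + Σ_{t' ≤ t, t' + d(t') = t} B u(t')`. -/
def delayTraj {n m : ℕ} (A : Matrix (Fin n) (Fin n) ℝ) (B : Matrix (Fin n) (Fin m) ℝ)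
    (d : ℕ → ℕ) (u : ℕ → Fin m → ℝ) (x₀ : Fin n → ℝ) : ℕ → Fin n → ℝ
  | 0 => x₀
  | t + 1 => A.mulVec (delayTraj A B d u x₀ t) +
      ∑ t' ∈ Finset.range (t + 1), if t' + d t' = t then B.mulVec (u t') else 0

/-- Controllability of the system with varying delays `(A, B, 𝒟)`. -/
def DelayControllable {n m : ℕ} (A : Matrix (Fin n) (Fin n) ℝ) (B : Matrix (Fin n) (Fin m) ℝ)
    (𝒟 : Finset ℕ) : Prop :=
  ∀ d : ℕ → ℕ, (∀ t : ℕ, d t ∈ 𝒟) → ∀ x₀ xf : Fin n → ℝ,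
    ∃ u : ℕ → Fin m → ℝ, ∃ T : ℕ, delayTraj A B d u x₀ T = xf

/-- The controllability matrix `C̄_d(t)` of a system with varying delays: its `i`-th
block column (here indexed by `j = i - 1 : Fin t`) is `A^{t−i−d(i−1)} B` when
`i + d(i−1) ≤ t`, and the zero block otherwise. -/
def delayCtrbMat {n m : ℕ} (A : Matrix (Fin n) (Fin n) ℝ) (B : Matrix (Fin n) (Fin m) ℝ)
    (d : ℕ → ℕ) (t : ℕ) : Matrix (Fin n) (Fin t × Fin m) ℝ :=
  fun k jl => if (jl.1 : ℕ) + 1 + d (jl.1 : ℕ) ≤ t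
    then (A ^ (t - ((jl.1 : ℕ) + 1) - d (jl.1 : ℕ)) * B) k jl.2 else 0

-- The actuation signal `τ_d` of a delay signal `d`: `τ_d(t) = 1` iff there is
-- `t'` with `t' + d(t') = t`.
open Classical in
noncomputable def actuation (d : ℕ → ℕ) (t : ℕ) : Bool :=
  if ∃ t' : ℕ, t' + d t' = t then true else false



section aux

lemma ultra_const {α : Type*} [Finite α] [Nonempty α] (U : Ultrafilter ℕ) (f : ℕ → α) :
    ∃ x, {i | f i = x} ∈ U := by
  by_contra hc
  push_neg at hc
  have h1 : ∀ x : α, {i | f i ≠ x} ∈ U := by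
    intro x
    exact (Ultrafilter.compl_mem_iff_notMem (s := {i | f i = x})).mpr (hc x)
  have h2 : (⋂ x : α, {i | f i ≠ x}) ∈ U := Filter.iInter_mem.mpr h1
  have h3 : (⋂ x : α, {i | f i ≠ x}) = (∅ : Set ℕ) := by
    ext i; simp
  rw [h3] at h2
  exact Filter.empty_notMem (U : Filter ℕ) h2

lemma rank_prefix_le {n m : ℕ} (A : Matrix (Fin n) (Fin n) ℝ) (B : Matrix (Fin n) (Fin m) ℝ)
    (hA : IsUnit A.det) (σ τ : ℕ → Bool) (t i : ℕ) (hti : t ≤ i)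
    (hpre : ∀ s, s < t → σ s = τ s) :
    (reachMat A B σ t).rank ≤ (reachMat A B τ i).rank := by
  set A' : Matrix (Fin n) (Fin n) ℝ := A ^ (i - t) with hA'
  have hA'u : IsUnit A'.det := by
    rw [hA', Matrix.det_pow]; exact hA.pow _
  set g : Fin t × Fin m → Fin i × Fin m := fun jl => (⟨(jl.1 : ℕ) + (i - t), by omega⟩, jl.2)
  have key : A' * reachMat A B σ t = (reachMat A B τ i).submatrix id g := by
    ext k jl
    obtain ⟨j, l⟩ := jl
    have hj : (j : ℕ) < t := j.2
    have h1 : σ (t - 1 - (j : ℕ)) = τ (i - 1 - ((j : ℕ) + (i - t))) := by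
      have : i - 1 - ((j : ℕ) + (i - t)) = t - 1 - (j : ℕ) := by omega
      rw [this]; exact hpre _ (by omega)
    simp only [Matrix.mul_apply, reachMat, Matrix.submatrix_apply, id_eq, g, mul_ite, mul_zero]
    rw [← h1]
    by_cases hσ : σ (t - 1 - (j : ℕ)) = true
    · simp only [hσ, if_true, Finset.sum_ite_irrel]
      have h2 : A ^ ((j : ℕ) + (i - t)) = A' * A ^ (j : ℕ) := by
        rw [hA', ← pow_add, Nat.add_comm]
      rw [h2]
      simp only [Matrix.mul_apply, Finset.mul_sum, Finset.sum_mul, mul_assoc]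
      exact Finset.sum_comm
    · simp only [Bool.not_eq_true] at hσ
      simp [hσ]
  have hX : reachMat A B σ t = A'⁻¹ * ((reachMat A B τ i).submatrix id g) := by
    rw [← key, ← Matrix.mul_assoc, Matrix.nonsing_inv_mul _ hA'u, Matrix.one_mul]
  set E : Matrix (Fin i × Fin m) (Fin t × Fin m) ℝ :=
    fun a b => if a = g b then 1 else 0 with hE
  have hsub : (reachMat A B τ i).submatrix id g = reachMat A B τ i * E := by
    ext k b
    simp only [Matrix.mul_apply, Matrix.submatrix_apply, id_eq, hE, mul_ite, mul_one, mul_zero]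
    show _ = ∑ a, reachMat A B τ i k a * (if a = g b then 1 else 0)
    simp
  calc (reachMat A B σ t).rank
      ≤ ((reachMat A B τ i).submatrix id g).rank := by
        rw [hX]; exact Matrix.rank_mul_le_right _ _
    _ = (reachMat A B τ i * E).rank := by rw [hsub]
    _ ≤ (reachMat A B τ i).rank := Matrix.rank_mul_le_left _ _

end aux

theorem inf_signal_iff_finite_words {N n m : ℕ} (A : Matrix (Fin n) (Fin n) ℝ)
    (B : Matrix (Fin n) (Fin m) ℝ) (𝒜 : Automaton N) (hA : IsUnit A.det) :
    (∃ σ : ℕ → Bool, 𝒜.Admissible σ ∧ ∀ t : ℕ, (reachMat A B σ t).rank < n) ↔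
    (∃ w : ℕ → (ℕ → Bool), ∀ i : ℕ, 1 ≤ i →
      𝒜.AdmissibleWord i (w i) ∧ (reachMat A B (w i) i).rank < n) := by
  constructor
  · rintro ⟨σ, ⟨v, hv⟩, hrk⟩
    exact ⟨fun _ => σ, fun i _ => ⟨⟨v, fun t _ => (hv t).1, fun t _ => (hv t).2⟩, hrk i⟩⟩
  · rintro ⟨w, h⟩
    have hN : Nonempty (Fin N) := by
      obtain ⟨v, _, _⟩ := (h 1 le_rfl).1
      exact ⟨v 0⟩
    choose V hV1 hV2 using fun i : ℕ => ((h (i + 1) (Nat.le_add_left 1 i)).1 :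
      𝒜.AdmissibleWord (i + 1) (w (i + 1)))
    set U : Ultrafilter ℕ := Filter.hyperfilter ℕ with hU
    choose v hvmem using fun t : ℕ => ultra_const U (fun i => V i t)
    set σ : ℕ → Bool := fun t => 𝒜.s (v t) with hσ
    have hcof : ∀ t : ℕ, {i : ℕ | t ≤ i} ∈ U := by
      intro t
      apply Filter.mem_hyperfilter_of_finite_compl
      have : {i : ℕ | t ≤ i}ᶜ ⊆ Set.Iio t := by intro i hi; simpa using hi
      exact Set.Finite.subset (Set.finite_Iio t) this
    refine ⟨σ, ⟨v, fun t => ?_⟩, fun t => ?_⟩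
    · refine ⟨?_, rfl⟩
      have hmem : ({i : ℕ | V i t = v t} ∩ {i : ℕ | V i (t + 1) = v (t + 1)}
          ∩ {i : ℕ | t + 1 ≤ i}) ∈ U :=
        Filter.inter_mem (Filter.inter_mem (hvmem t) (hvmem (t + 1))) (hcof (t + 1))
      obtain ⟨i, ⟨⟨hi1, hi2⟩, hi3⟩⟩ := Filter.nonempty_of_mem hmem
      simp only [Set.mem_setOf_eq] at hi1 hi2 hi3
      have := hV1 i t (by omega)
      rwa [hi1, hi2] at this
    · have hmem : ((⋂ s ∈ Finset.range t, {i : ℕ | V i s = v s}) ∩ {i : ℕ | t ≤ i}) ∈ U :=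
        Filter.inter_mem ((Filter.biInter_finset_mem _).mpr fun s _ => hvmem s) (hcof t)
      obtain ⟨i, hi1, hi2⟩ := Filter.nonempty_of_mem hmem
      simp only [Set.mem_setOf_eq] at hi2
      have hpre : ∀ s, s < t → σ s = w (i + 1) s := by
        intro s hs
        have hVs : V i s = v s := Set.mem_iInter₂.mp hi1 s (Finset.mem_range.mpr hs)
        show 𝒜.s (v s) = w (i + 1) s
        rw [← hVs]
        exact (hV2 i s (by omega)).symm
      have hle := rank_prefix_le A B hA σ (w (i + 1)) t (i + 1) (by omega) hpre
      exact lt_of_le_of_lt hle (h (i + 1) (Nat.le_add_left 1 i)).2
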